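/- Let p,q∈ℂ with |p|<1, |q|<1 and t∈ℂ* be such that (p;p)_∞≠0, (q;q)_∞≠0 and Γ(t^i;p,q) is defined and nonzero for all i≥1. Suppose c:{1,2,3,…}×ℕ→ℂ satisfies: c_{r,0}=1 for all r≥1; c_{1,n}=c_{1,n-1}·(2n/((p;p)_∞(q;q)_∞))·Γ(t^n;p,q)/Γ(t;p,q) for all n≥1; and c_{r,n}=c_{r-1,n}·c_{r,n-1}·(2n/((p;p)_∞(q;q)_∞))^{C(n+r-2,r-1)}·[∏_{i=1}^n Γ(t^i;p,q)^{C(n-i+r-2,r-2)}]/Γ(t;p,q)^{C(n+r-2,r-1)} for all r≥2 and n≥1. Then for all r≥1 and n≥0, c_{r,n} = ( 2^n·n!/((p;p)_∞^n(q;q)_∞^n) )^{C(n+r-1,r-1)} · ∏_{i=1}^n ( Γ(t^i;p,q)/Γ(t;p,q) )^{r·C(n-i+r-1,r-1)}, where C(a,b)=binomial(a,b). -/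

import Mathlib

open scoped BigOperators Topology
open Finset MeasureTheory

noncomputable section

/-- `(u;p)_∞ = ∏_{i≥0} (1 - p^i u)`. -/
def poch (u p : ℂ) : ℂ := ∏' i : ℕ, (1 - p ^ i * u)

/-- `(u;p,q)_∞ = ∏_{i,j≥0} (1 - p^i q^j u)`. -/
def poch2 (u p q : ℂ) : ℂ := ∏' ij : ℕ × ℕ, (1 - p ^ ij.1 * q ^ ij.2 * u)

/-- The multiplicative theta function `θ(u;p)`. -/
def theta (u p : ℂ) : ℂ := poch u p * poch (p / u) p

/-- The elliptic gamma function `Γ(u;p,q)`. -/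
def ellGamma (u p q : ℂ) : ℂ := poch2 (p * q / u) p q / poch2 u p q

/-- `e(u,v;p) = u⁻¹ θ(uv;p) θ(u/v;p)`. -/
def efun (p t u v : ℂ) : ℂ := u⁻¹ * theta (u * v) p * theta (u / v) p

/-- `θ(u;p)_{t,k}`. -/
def thetaFac (p t u : ℂ) (k : ℕ) : ℂ := ∏ j ∈ Finset.range k, theta (t ^ j * u) p

/-- `e(u,v;p)_{t,k}`. -/
def efunFac (p t u v : ℂ) (k : ℕ) : ℂ := ∏ j ∈ Finset.range k, efun p t (t ^ j * u) v

/-- The number of indices `j < i` with `k j = l`. -/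
def cnt {n s : ℕ} (k : Fin n → Fin s) (i : ℕ) (l : Fin s) : ℕ :=
  (Finset.univ.filter (fun j : Fin n => (j : ℕ) < i ∧ k j = l)).card

/-- The elliptic interpolation function `E_μ(c;z;p)` of type `BC_n`. -/
def interpE (p t : ℂ) {s n : ℕ} (c : Fin s → ℂ) (z : Fin n → ℂ) (μ : Fin s → ℕ) : ℂ :=
  ∑ k : Fin n → Fin s,
    if ∀ l, cnt k n l = μ l then
      ∏ i : Fin n, ∏ l ∈ Finset.univ.filter (fun l => l ≠ k i),
        efun p t (z i) (t ^ cnt k ((i : ℕ) + 1) l * c l) /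
          efun p t (t ^ cnt k (i : ℕ) (k i) * c (k i)) (t ^ cnt k (i : ℕ) l * c l)
    else 0

/-- `Z_{s,n}`, the multi-indices `μ ∈ ℕ^s` with `|μ| = n`. -/
abbrev Zidx (s n : ℕ) := {μ : Fin s → ℕ // ∑ i, μ i = n}

instance (s n : ℕ) : Fintype (Zidx s n) :=
  Fintype.subtype (Finset.Nat.antidiagonalTuple s n)
    (fun μ => Finset.Nat.mem_antidiagonalTuple)

/-- The `BC_n` elliptic hypergeometric kernel `Φ(z;a;p,q)`. -/
def PhiBC (p q t : ℂ) {n m : ℕ} (a : Fin m → ℂ) (z : Fin n → ℂ) : ℂ :=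
  (∏ i, (∏ k, ellGamma (a k * z i) p q * ellGamma (a k * (z i)⁻¹) p q) /
      (ellGamma (z i ^ 2) p q * ellGamma ((z i)⁻¹ ^ 2) p q)) *
  ∏ i, ∏ j ∈ Finset.univ.filter (fun j => i < j),
    (ellGamma (t * (z i * z j)) p q * ellGamma (t * (z i / z j)) p q *
        ellGamma (t * (z j / z i)) p q * ellGamma (t / (z i * z j)) p q) /
      (ellGamma (z i * z j) p q * ellGamma (z i / z j) p q *
        ellGamma (z j / z i) p q * ellGamma ((z i * z j)⁻¹) p q)

/-- `∫_{T^n} f(z) ω_n(z)` where `ω_n(z) = dz/((2πi)^n z₁⋯z_n)`. -/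
def torusInt (n : ℕ) (f : (Fin n → ℂ) → ℂ) : ℂ :=
  (1 / (2 * (Real.pi : ℂ))) ^ n *
    ∫ θ : Fin n → ℝ in Set.univ.pi fun _ : Fin n => Set.Icc (0 : ℝ) (2 * Real.pi),
      f fun i => Complex.exp (Complex.I * (θ i : ℂ))



private lemma hockey_aux (s : ℕ) : ∀ m : ℕ,
    ∑ j ∈ Finset.range m, (j + s).choose s = (m + s).choose (s + 1)
  | 0 => by simp [Nat.choose_eq_zero_of_lt]
  | (m + 1) => by
      rw [Finset.sum_range_succ, hockey_aux s m, show m + 1 + s = m + s + 1 from by omega,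
        show (m + s + 1).choose (s + 1) = (m + s).choose s + (m + s).choose (s + 1) from
          Nat.choose_succ_succ (m + s) s]
      omega

private lemma hockey (s n : ℕ) :
    (n + s + 1).choose (s + 1) = ∑ i ∈ Finset.range (n + 1), (n + s - i).choose s := by
  have h := Finset.sum_range_reflect (fun i => (n + s - i).choose s) (n + 1)
  rw [← h, show n + s + 1 = n + 1 + s from by omega, ← hockey_aux s (n + 1)]
  exact Finset.sum_congr rfl fun j hj => by
    have hj' := Finset.mem_range.mp hj; congr 1; omega

private lemma prod_div_pow (G : ℂ) (g : ℕ → ℂ) (m K : ℕ) (e : ℕ → ℕ)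
    (hK : K = ∑ i ∈ Finset.range m, e i) :
    (∏ i ∈ Finset.range m, g i ^ e i) / G ^ K = ∏ i ∈ Finset.range m, (g i / G) ^ e i := by
  subst hK
  rw [← Finset.prod_pow_eq_pow_sum, ← Finset.prod_div_distrib]
  exact Finset.prod_congr rfl fun i _ => (div_pow _ _ _).symm

private lemma main_step (A D Γ1 : ℂ) (g : ℕ → ℂ) (n s : ℕ) :
    ((A * D) ^ ((n + s + 1).choose s) *
          (∏ i ∈ Finset.range (n + 1), (g i / Γ1) ^ ((s + 1) * (n + s - i).choose s)) *
        (A ^ ((n + s + 1).choose (s + 1)) *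
          ∏ i ∈ Finset.range n, (g i / Γ1) ^ ((s + 1 + 1) * (n + s - i).choose (s + 1))) *
        D ^ ((n + s + 1).choose (s + 1)) *
        ∏ i ∈ Finset.range (n + 1), g i ^ (n + s - i).choose s) /
      Γ1 ^ ((n + s + 1).choose (s + 1))
    = (A * D) ^ ((n + s + 2).choose (s + 1)) *
        ∏ i ∈ Finset.range (n + 1), (g i / Γ1) ^ ((s + 1 + 1) * (n + s + 1 - i).choose (s + 1)) := by
  rw [mul_div_assoc, prod_div_pow Γ1 g (n + 1) _ _ (hockey s n)]
  rw [show (∏ i ∈ Finset.range n, (g i / Γ1) ^ ((s + 1 + 1) * (n + s - i).choose (s + 1)))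
      = ∏ i ∈ Finset.range (n + 1), (g i / Γ1) ^ ((s + 1 + 1) * (n + s - i).choose (s + 1)) from by
    rw [Finset.prod_range_succ, show n + s - n = s from by omega,
      Nat.choose_eq_zero_of_lt (by omega), Nat.mul_zero, pow_zero, mul_one]]
  have hcomb : (∏ i ∈ Finset.range (n + 1), (g i / Γ1) ^ ((s + 1) * (n + s - i).choose s))
      * (∏ i ∈ Finset.range (n + 1), (g i / Γ1) ^ ((s + 1 + 1) * (n + s - i).choose (s + 1)))
      * (∏ i ∈ Finset.range (n + 1), (g i / Γ1) ^ (n + s - i).choose s)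
      = ∏ i ∈ Finset.range (n + 1), (g i / Γ1) ^ ((s + 1 + 1) * (n + s + 1 - i).choose (s + 1)) := by
    rw [← Finset.prod_mul_distrib, ← Finset.prod_mul_distrib]
    refine Finset.prod_congr rfl fun i hi => ?_
    have hi' := Finset.mem_range.mp hi
    rw [← pow_add, ← pow_add, show n + s + 1 - i = (n + s - i) + 1 from by omega,
      show ((n + s - i) + 1).choose (s + 1) = (n + s - i).choose s + (n + s - i).choose (s + 1)
        from Nat.choose_succ_succ _ _]
    congr 1
    ring
  rw [show (n + s + 2).choose (s + 1) = (n + s + 1).choose s + (n + s + 1).choose (s + 1) from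
    Nat.choose_succ_succ _ _, ← hcomb]
  ring

/-- solving the recurrence for the constants `c_{r,n}`. -/
theorem crn_recursion_solution (p q t : ℂ)
    (hp : ‖p‖ < 1) (hq : ‖q‖ < 1) (ht : t ≠ 0)
    (hpp : poch p p ≠ 0) (hqq : poch q q ≠ 0)
    (hgam : ∀ i : ℕ, 1 ≤ i → ellGamma (t ^ i) p q ≠ 0)
    (c : ℕ → ℕ → ℂ)
    (h0 : ∀ r : ℕ, 1 ≤ r → c r 0 = 1)
    (h1 : ∀ n : ℕ, 1 ≤ n →
      c 1 n = c 1 (n - 1) * ((2 * (n : ℂ)) / (poch p p * poch q q))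
        * (ellGamma (t ^ n) p q / ellGamma t p q))
    (h2 : ∀ r n : ℕ, 2 ≤ r → 1 ≤ n →
      c r n = c (r - 1) n * c r (n - 1)
        * ((2 * (n : ℂ)) / (poch p p * poch q q)) ^ ((n + r - 2).choose (r - 1))
        * (∏ i ∈ Finset.range n,
            ellGamma (t ^ (i + 1)) p q ^ ((n - (i + 1) + r - 2).choose (r - 2)))
        / ellGamma t p q ^ ((n + r - 2).choose (r - 1))) :
    ∀ r n : ℕ, 1 ≤ r →
      c r n = ((2 : ℂ) ^ n * (n.factorial : ℂ) / (poch p p ^ n * poch q q ^ n))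
          ^ ((n + r - 1).choose (r - 1))
        * ∏ i ∈ Finset.range n,
            (ellGamma (t ^ (i + 1)) p q / ellGamma t p q)
              ^ (r * ((n - (i + 1) + r - 1).choose (r - 1))) := by
  intro r
  induction r with
  | zero => intro n h; exact absurd h (by omega)
  | succ r ih =>
    intro n _
    induction n with
    | zero =>
      rw [h0 (r + 1) (by omega)]; simp
    | succ n ihn =>
      have hA : (2 : ℂ) ^ (n + 1) * ((n + 1).factorial : ℂ) /
            (poch p p ^ (n + 1) * poch q q ^ (n + 1))
          = (2 ^ n * (n.factorial : ℂ) / (poch p p ^ n * poch q q ^ n)) *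
              (2 * ((n + 1 : ℕ) : ℂ) / (poch p p * poch q q)) := by
        rw [div_mul_div_comm]
        congr 1
        · push_cast [Nat.factorial_succ]; ring
        · ring
      rcases Nat.eq_zero_or_pos r with rfl | hr
      · rw [h1 (n + 1) (by omega)]
        simp only [Nat.add_sub_cancel, Nat.zero_add, Nat.sub_self, Nat.choose_zero_right, pow_one,
          one_mul, mul_one] at ihn ⊢
        rw [ihn, Finset.prod_range_succ, hA]
        ring
      · obtain ⟨s, rfl⟩ : ∃ s, r = s + 1 := ⟨r - 1, by omega⟩
        rw [h2 (s + 1 + 1) (n + 1) (by omega) (by omega)]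
        simp only [Nat.add_sub_cancel]
        rw [ih (n + 1) (by omega), ihn]
        rw [show s + 1 - 1 = s from by omega,
          show s + 1 + 1 - 1 = s + 1 from by omega,
          show n + 1 + (s + 1) - 1 = n + s + 1 from by omega,
          show n + (s + 1 + 1) - 1 = n + s + 1 from by omega,
          show n + 1 + (s + 1 + 1) - 2 = n + s + 1 from by omega,
          show n + 1 + (s + 1 + 1) - 1 = n + s + 2 from by omega,
          show s + 1 + 1 - 2 = s from by omega]
        rw [show (∏ i ∈ Finset.range (n + 1),
              (ellGamma (t ^ (i + 1)) p q / ellGamma t p q) ^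
                ((s + 1) * (n + 1 - (i + 1) + (s + 1) - 1).choose s))
            = ∏ i ∈ Finset.range (n + 1),
              (ellGamma (t ^ (i + 1)) p q / ellGamma t p q) ^ ((s + 1) * (n + s - i).choose s) from
          Finset.prod_congr rfl fun i hi => by
            have hi' := Finset.mem_range.mp hi
            rw [show n + 1 - (i + 1) + (s + 1) - 1 = n + s - i from by omega]]
        rw [show (∏ i ∈ Finset.range n,
              (ellGamma (t ^ (i + 1)) p q / ellGamma t p q) ^
                ((s + 1 + 1) * (n - (i + 1) + (s + 1 + 1) - 1).choose (s + 1)))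
            = ∏ i ∈ Finset.range n,
              (ellGamma (t ^ (i + 1)) p q / ellGamma t p q) ^
                ((s + 1 + 1) * (n + s - i).choose (s + 1)) from
          Finset.prod_congr rfl fun i hi => by
            have hi' := Finset.mem_range.mp hi
            rw [show n - (i + 1) + (s + 1 + 1) - 1 = n + s - i from by omega]]
        rw [show (∏ i ∈ Finset.range (n + 1),
              ellGamma (t ^ (i + 1)) p q ^ (n + 1 - (i + 1) + (s + 1 + 1) - 2).choose s)
            = ∏ i ∈ Finset.range (n + 1),
              ellGamma (t ^ (i + 1)) p q ^ (n + s - i).choose s from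
          Finset.prod_congr rfl fun i hi => by
            have hi' := Finset.mem_range.mp hi
            rw [show n + 1 - (i + 1) + (s + 1 + 1) - 2 = n + s - i from by omega]]
        rw [show (∏ i ∈ Finset.range (n + 1),
              (ellGamma (t ^ (i + 1)) p q / ellGamma t p q) ^
                ((s + 1 + 1) * (n + 1 - (i + 1) + (s + 1 + 1) - 1).choose (s + 1)))
            = ∏ i ∈ Finset.range (n + 1),
              (ellGamma (t ^ (i + 1)) p q / ellGamma t p q) ^
                ((s + 1 + 1) * (n + s + 1 - i).choose (s + 1)) from
          Finset.prod_congr rfl fun i hi => by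
            have hi' := Finset.mem_range.mp hi
            rw [show n + 1 - (i + 1) + (s + 1 + 1) - 1 = n + s + 1 - i from by omega]]
        rw [hA]
        exact main_step _ _ _ (fun i => ellGamma (t ^ (i + 1)) p q) n s

end
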